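/- Let S be the decomposable operator on L²(X,μ;H) with measurable field T. Then the Hilbert-space adjoint S* is the decomposable operator with field ζ ↦ T(ζ)*: for every f ∈ L²(X,μ;H), (S* f)(ζ) = (T(ζ))*(f(ζ)) for μ-almost every ζ ∈ X. -/

import Mathlib

open MeasureTheory

/-- `T` is a measurable field of bounded operators: pointwise measurable and
essentially bounded in operator norm. -/
def MeasurableFieldOfOperators {X : Type*} [MeasurableSpace X]
    {H : Type*} [NormedAddCommGroup H] [InnerProductSpace ℂ H]
    [MeasurableSpace H] [BorelSpace H]
    (μ : Measure X) (T : X → H →L[ℂ] H) : Prop :=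
  (∀ x : H, Measurable fun ζ => T ζ x) ∧ ∃ C : ℝ, ∀ᵐ ζ ∂μ, ‖T ζ‖ ≤ C

/-- `S` is the decomposable operator on `L²(X, μ; H)` with field `T`. -/
def IsDecomposableOperatorWith {X : Type*} [MeasurableSpace X]
    {H : Type*} [NormedAddCommGroup H] [InnerProductSpace ℂ H]
    (μ : Measure X) (S : Lp H 2 μ →L[ℂ] Lp H 2 μ) (T : X → H →L[ℂ] H) : Prop :=
  ∀ f : Lp H 2 μ, ∀ᵐ ζ ∂μ, (S f : X → H) ζ = T ζ ((f : X → H) ζ)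

theorem adjoint_of_decomposable
    {X : Type*} [MeasurableSpace X] [StandardBorelSpace X]
    {μ : Measure X} [SigmaFinite μ]
    {H : Type*} [NormedAddCommGroup H] [InnerProductSpace ℂ H]
    [CompleteSpace H] [SecondCountableTopology H] [MeasurableSpace H] [BorelSpace H]
    (T : X → H →L[ℂ] H) (hT : MeasurableFieldOfOperators μ T)
    (S : Lp H 2 μ →L[ℂ] Lp H 2 μ) (hS : IsDecomposableOperatorWith μ S T) :
    IsDecomposableOperatorWith μ (ContinuousLinearMap.adjoint S)
      (fun ζ => ContinuousLinearMap.adjoint (T ζ)) := by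
  intro f
  set g : Lp H 2 μ := ContinuousLinearMap.adjoint S f with hg
  -- Key pointwise identity tested against a fixed vector `x`.
  have key : ∀ x : H, ∀ᵐ ζ ∂μ,
      (inner ℂ x ((g : X → H) ζ) : ℂ) = inner ℂ (T ζ x) ((f : X → H) ζ) := by
    intro x
    have hzero : (fun ζ => (inner ℂ x ((g : X → H) ζ) : ℂ)
        - inner ℂ (T ζ x) ((f : X → H) ζ)) =ᵐ[μ] 0 := by
      apply ae_eq_zero_of_forall_setIntegral_eq_of_sigmaFinite
      · -- integrability on finite-measure sets
        intro s hs hμs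
        set u : Lp H 2 μ := indicatorConstLp 2 hs hμs.ne x with hu
        have hucoe : (u : X → H) =ᵐ[μ] s.indicator fun _ => x :=
          indicatorConstLp_coeFn
        have h1 : IntegrableOn (fun ζ => (inner ℂ x ((g : X → H) ζ) : ℂ)) s μ := by
          have := (L2.integrable_inner (𝕜 := ℂ) u g).restrict (s := s)
          refine this.congr ?_
          filter_upwards [ae_restrict_of_ae hucoe,
            ae_restrict_mem hs] with ζ h1 h2
          rw [h1, Set.indicator_of_mem h2]
        have h2 : IntegrableOn (fun ζ => (inner ℂ (T ζ x) ((f : X → H) ζ) : ℂ)) s μ := by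
          have := (L2.integrable_inner (𝕜 := ℂ) (S u) f).restrict (s := s)
          refine this.congr ?_
          filter_upwards [ae_restrict_of_ae hucoe, ae_restrict_of_ae (hS u),
            ae_restrict_mem hs] with ζ h1 h2 h3
          rw [h2, h1, Set.indicator_of_mem h3]
        exact h1.sub h2
      · -- vanishing of set integrals
        intro s hs hμs
        set u : Lp H 2 μ := indicatorConstLp 2 hs hμs.ne x with hu
        have hucoe : (u : X → H) =ᵐ[μ] s.indicator fun _ => x :=
          indicatorConstLp_coeFn
        have hint1 : Integrable (fun ζ => (inner ℂ ((u : X → H) ζ) ((g : X → H) ζ) : ℂ)) μ :=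
          L2.integrable_inner (𝕜 := ℂ) u g
        have hint2 : Integrable (fun ζ => (inner ℂ (((S u) : X → H) ζ) ((f : X → H) ζ) : ℂ)) μ :=
          L2.integrable_inner (𝕜 := ℂ) (S u) f
        have e1 : ∫ ζ in s, (inner ℂ x ((g : X → H) ζ) : ℂ) ∂μ
            = (inner ℂ u g : ℂ) := by
          rw [L2.inner_def]
          rw [← integral_indicator hs]
          refine integral_congr_ae ?_
          filter_upwards [hucoe] with ζ h1
          by_cases hζ : ζ ∈ s
          · rw [Set.indicator_of_mem hζ, h1, Set.indicator_of_mem hζ]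
          · rw [Set.indicator_of_notMem hζ, h1, Set.indicator_of_notMem hζ,
              inner_zero_left]
        have e2 : ∫ ζ in s, (inner ℂ (T ζ x) ((f : X → H) ζ) : ℂ) ∂μ
            = (inner ℂ (S u) f : ℂ) := by
          rw [L2.inner_def]
          rw [← integral_indicator hs]
          refine integral_congr_ae ?_
          filter_upwards [hucoe, hS u] with ζ h1 h2
          by_cases hζ : ζ ∈ s
          · rw [Set.indicator_of_mem hζ, h2, h1, Set.indicator_of_mem hζ]
          · rw [Set.indicator_of_notMem hζ, h2, h1, Set.indicator_of_notMem hζ,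
              map_zero, inner_zero_left]
        have hadj : (inner ℂ u g : ℂ) = inner ℂ (S u) f := by
          rw [hg, ContinuousLinearMap.adjoint_inner_right]
        have h1 : IntegrableOn (fun ζ => (inner ℂ x ((g : X → H) ζ) : ℂ)) s μ := by
          refine (hint1.restrict (s := s)).congr ?_
          filter_upwards [ae_restrict_of_ae hucoe, ae_restrict_mem hs] with ζ h1 h2
          rw [h1, Set.indicator_of_mem h2]
        have h2 : IntegrableOn (fun ζ => (inner ℂ (T ζ x) ((f : X → H) ζ) : ℂ)) s μ := by
          refine (hint2.restrict (s := s)).congr ?_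
          filter_upwards [ae_restrict_of_ae hucoe, ae_restrict_of_ae (hS u),
            ae_restrict_mem hs] with ζ h1 h2 h3
          rw [h2, h1, Set.indicator_of_mem h3]
        rw [integral_sub h1 h2, e1, e2, hadj, sub_self]
    filter_upwards [hzero] with ζ hζ
    have := sub_eq_zero.mp (by simpa using hζ)
    exact this
  -- Upgrade to a vector identity using a countable dense set.
  have : Nonempty H := ⟨0⟩
  have hsep : TopologicalSpace.SeparableSpace H := inferInstance
  set e : ℕ → H := TopologicalSpace.denseSeq H with he
  have hdense : DenseRange e := TopologicalSpace.denseRange_denseSeq H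
  have hall : ∀ᵐ ζ ∂μ, ∀ n : ℕ,
      (inner ℂ (e n) ((g : X → H) ζ) : ℂ) = inner ℂ (T ζ (e n)) ((f : X → H) ζ) :=
    ae_all_iff.mpr fun n => key (e n)
  filter_upwards [hall] with ζ hζ
  -- show `g ζ = (T ζ)† (f ζ)`
  refine ext_inner_left ℂ fun v => ?_
  rw [ContinuousLinearMap.adjoint_inner_right]
  -- the two continuous functions `v ↦ ⟪v, g ζ⟫` and `v ↦ ⟪T ζ v, f ζ⟫` agree on a dense set
  have hcont1 : Continuous fun v : H => (inner ℂ v ((g : X → H) ζ) : ℂ) :=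
    continuous_id.inner continuous_const
  have hcont2 : Continuous fun v : H => (inner ℂ (T ζ v) ((f : X → H) ζ) : ℂ) :=
    ((T ζ).continuous).inner continuous_const
  have := Continuous.ext_on hdense hcont1 hcont2 ?_
  · exact congrFun this v
  · rintro _ ⟨n, rfl⟩
    exact hζ n
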